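/- Let t₀ ≥ 0, and let g, x, y : [t₀, ∞) → ℝ be continuous with x ≥ 0 and y ≥ 0 and g > 0. Assume that for all t₀ ≤ τ₁ < τ₂: x(τ₂) + ∫_{τ₁}^{τ₂} g(τ)^{2α} x(τ) dτ ≤ x(τ₁) + ∫_{τ₁}^{τ₂} y(τ) dτ. Then for all t > t₀: x(t) · exp(∫_{t₀}^t g(τ)^{2α} dτ) ≤ x(t₀) + ∫_{t₀}^t exp(∫_{t₀}^τ g(τ')^{2α} dτ') y(τ) dτ. -/

import Mathlib

open MeasureTheory intervalIntegral

theorem gronwall_aux (t₀ : ℝ) (w x y : ℝ → ℝ)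
    (hw : Continuous w) (hx : Continuous x) (hy : Continuous y)
    (hw0 : ∀ t, 0 ≤ w t) (hx0 : ∀ t, 0 ≤ x t) (hy0 : ∀ t, 0 ≤ y t)
    (hineq : ∀ τ₁ τ₂ : ℝ, t₀ ≤ τ₁ → τ₁ < τ₂ →
      x τ₂ + ∫ τ in τ₁..τ₂, w τ * x τ ≤ x τ₁ + ∫ τ in τ₁..τ₂, y τ) :
    ∀ t : ℝ, t₀ < t →
      x t * Real.exp (∫ τ in t₀..t, w τ) ≤
        x t₀ + ∫ τ in t₀..t, Real.exp (∫ τ' in t₀..τ, w τ') * y τ := by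
  intro t ht
  set G : ℝ → ℝ := fun s => ∫ u in t₀..s, w u with hGdef
  have hGd : ∀ s, HasDerivAt G (w s) s := fun s =>
    intervalIntegral.integral_hasDerivAt_right (hw.intervalIntegrable _ _)
      (hw.aestronglyMeasurable.stronglyMeasurableAtFilter) hw.continuousAt
  have hGc : Continuous G := continuous_iff_continuousAt.2 fun s => (hGd s).continuousAt
  have hE : Continuous fun u => Real.exp (G u) := Real.continuous_exp.comp hGc
  have hEw : Continuous fun u => Real.exp (G u) * w u := hE.mul hw
  have hEy : Continuous fun u => Real.exp (G u) * y u := hE.mul hy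
  have hwx : Continuous fun u => w u * x u := hw.mul hx
  have hEwx : Continuous fun u => Real.exp (G u) * (w u * x u) := hE.mul hwx
  have hftc : ∀ a b : ℝ, Real.exp (G b) - Real.exp (G a) = ∫ u in a..b, Real.exp (G u) * w u :=
    fun a b => (intervalIntegral.integral_eq_sub_of_hasDerivAt
      (fun u _ => (hGd u).exp) (hEw.intervalIntegrable a b)).symm
  have hGmono : ∀ a b : ℝ, a ≤ b → G a ≤ G b := by
    intro a b hab
    have h1 : G a + ∫ u in a..b, w u = G b :=
      intervalIntegral.integral_add_adjacent_intervals (hw.intervalIntegrable t₀ a)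
        (hw.intervalIntegrable a b)
    have h2 : (0:ℝ) ≤ ∫ u in a..b, w u :=
      intervalIntegral.integral_nonneg hab fun u _ => hw0 u
    linarith
  set E : ℝ → ℝ := fun s => Real.exp (G s) * x s - ∫ u in t₀..s, Real.exp (G u) * y u with hEdef
  have hPd : ∀ s, HasDerivAt (fun s => ∫ u in t₀..s, Real.exp (G u) * y u)
      (Real.exp (G s) * y s) s := fun s =>
    intervalIntegral.integral_hasDerivAt_right (hEy.intervalIntegrable _ _)
      (hEy.aestronglyMeasurable.stronglyMeasurableAtFilter) hEy.continuousAt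
  have hPc : Continuous fun s => ∫ u in t₀..s, Real.exp (G u) * y u :=
    continuous_iff_continuousAt.2 fun s => (hPd s).continuousAt
  have hEc : Continuous E := (hE.mul hx).sub hPc
  -- bounds on a compact interval
  obtain ⟨C, hC⟩ := (isCompact_Icc (a := t₀) (b := t + 1)).exists_bound_of_continuousOn
    hEw.continuousOn
  obtain ⟨C', hC'⟩ := (isCompact_Icc (a := t₀) (b := t + 1)).exists_bound_of_continuousOn
    hy.continuousOn
  obtain ⟨M, hM0, hMw, hMy⟩ : ∃ M : ℝ, 0 < M ∧ (∀ u ∈ Set.Icc t₀ (t+1), Real.exp (G u) * w u ≤ M)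
      ∧ (∀ u ∈ Set.Icc t₀ (t+1), y u ≤ M) := by
    refine ⟨|C| + |C'| + 1, by positivity, ?_, ?_⟩
    intro u hu
    have := hC u hu
    have h2 := le_abs_self (Real.exp (G u) * w u)
    rw [Real.norm_eq_abs] at this
    have := le_abs_self C
    have := abs_nonneg C'
    linarith [le_trans h2 (le_trans (hC u hu) (le_abs_self C))]
    intro u hu
    have h2 := le_abs_self (y u)
    have h3 := hC' u hu
    rw [Real.norm_eq_abs] at h3
    have := le_abs_self C'
    have := abs_nonneg C
    linarith
  -- the slope bound
  have hbound : ∀ τ ∈ Set.Ico t₀ t, ∀ r : ℝ, (0:ℝ) < r →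
      ∃ᶠ s in nhdsWithin τ (Set.Ioi τ), slope E τ s < r := by
    intro τ hτ r hr
    obtain ⟨ε, hε0, hMε⟩ : ∃ ε : ℝ, 0 < ε ∧ M * ε + ε * M = r / 2 :=
      ⟨r / (4 * M), by positivity, by field_simp; ring⟩
    have h1 : ∀ᶠ u in nhds τ, dist (x u) (x τ) < ε :=
      Metric.tendsto_nhds.mp (hx.continuousAt (x := τ)) ε hε0
    have h2 : ∀ᶠ u in nhds τ, dist (Real.exp (G u)) (Real.exp (G τ)) < ε :=
      Metric.tendsto_nhds.mp (hE.continuousAt (x := τ)) ε hε0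
    obtain ⟨δ, hδ0, hδ⟩ := Metric.eventually_nhds_iff.mp (h1.and h2)
    have hδ'0 : 0 < min δ 1 := lt_min hδ0 one_pos
    have hIoo : Set.Ioo τ (τ + min δ 1) ∈ nhdsWithin τ (Set.Ioi τ) :=
      Ioo_mem_nhdsGT_of_mem ⟨le_refl τ, by linarith⟩
    refine Filter.Eventually.frequently (Filter.eventually_of_mem hIoo ?_)
    rintro s ⟨hs1, hs2⟩
    have husub : ∀ u ∈ Set.Icc τ s, u ∈ Set.Icc t₀ (t+1) ∧
        |x u - x τ| < ε ∧ |Real.exp (G u) - Real.exp (G τ)| < ε := by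
      intro u hu
      have h3 : t₀ ≤ u := le_trans hτ.1 hu.1
      have hmin1 : min δ 1 ≤ 1 := min_le_right _ _
      have hminδ : min δ 1 ≤ δ := min_le_left _ _
      have h4 : u ≤ t + 1 := by
        have := hτ.2
        linarith [hu.2]
      have h5 : dist u τ < δ := by
        rw [Real.dist_eq, abs_of_nonneg (by linarith [hu.1])]
        linarith [hu.2]
      have := hδ h5
      rw [Real.dist_eq, Real.dist_eq] at this
      exact ⟨⟨h3, h4⟩, this⟩
    -- split the integral
    have hsplit : E s - E τ = (Real.exp (G s) * x s - Real.exp (G τ) * x τ)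
        - ∫ u in τ..s, Real.exp (G u) * y u := by
      have h : (∫ u in t₀..τ, Real.exp (G u) * y u) + ∫ u in τ..s, Real.exp (G u) * y u
          = ∫ u in t₀..s, Real.exp (G u) * y u := intervalIntegral.integral_add_adjacent_intervals
        (hEy.intervalIntegrable t₀ τ) (hEy.intervalIntegrable τ s)
      simp only [hEdef]
      linarith
    have hτ0 : t₀ ≤ τ := hτ.1
    have hws := hineq τ s hτ0 hs1
    have hcmp : (∫ u in τ..s, Real.exp (G u) * (w u * x u))
        ≤ Real.exp (G s) * ∫ u in τ..s, w u * x u := by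
      rw [← intervalIntegral.integral_const_mul]
      apply intervalIntegral.integral_mono_on hs1.le (hEwx.intervalIntegrable τ s)
        ((continuous_const.mul hwx).intervalIntegrable τ s)
      intro u hu
      have hGle : Real.exp (G u) ≤ Real.exp (G s) := Real.exp_le_exp.mpr (hGmono u s hu.2)
      exact mul_le_mul_of_nonneg_right hGle (mul_nonneg (hw0 u) (hx0 u))
    have key1 : Real.exp (G s) * x s ≤ Real.exp (G s) * x τ
        + Real.exp (G s) * (∫ u in τ..s, y u)
        - ∫ u in τ..s, Real.exp (G u) * (w u * x u) := by
      have hxs : x s ≤ x τ + ((∫ u in τ..s, y u) - ∫ u in τ..s, w u * x u) := by linarith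
      have h := mul_le_mul_of_nonneg_left hxs (Real.exp_pos (G s)).le
      rw [mul_add, mul_sub] at h
      linarith
    set F : ℝ → ℝ := fun u => x τ * (Real.exp (G u) * w u)
      + (Real.exp (G s) * y u - Real.exp (G u) * y u)
      - Real.exp (G u) * (w u * x u) with hFdef
    have hFc : Continuous F :=
      ((continuous_const.mul hEw).add ((continuous_const.mul hy).sub hEy)).sub hEwx
    have hFval : ∫ u in τ..s, F u = x τ * (Real.exp (G s) - Real.exp (G τ))
        + (Real.exp (G s) * (∫ u in τ..s, y u) - ∫ u in τ..s, Real.exp (G u) * y u)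
        - ∫ u in τ..s, Real.exp (G u) * (w u * x u) := by
      rw [hFdef]
      rw [intervalIntegral.integral_sub
          (f := fun u => x τ * (Real.exp (G u) * w u) + (Real.exp (G s) * y u - Real.exp (G u) * y u))
          (g := fun u => Real.exp (G u) * (w u * x u))
          (((continuous_const.mul hEw).add ((continuous_const.mul hy).sub hEy)).intervalIntegrable τ s)
          (hEwx.intervalIntegrable τ s),
        intervalIntegral.integral_add (f := fun u => x τ * (Real.exp (G u) * w u))
          (g := fun u => Real.exp (G s) * y u - Real.exp (G u) * y u) ((continuous_const.mul hEw).intervalIntegrable τ s)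
          (((continuous_const.mul hy).sub hEy).intervalIntegrable τ s),
        intervalIntegral.integral_sub (f := fun u => Real.exp (G s) * y u)
          (g := fun u => Real.exp (G u) * y u) ((continuous_const.mul hy).intervalIntegrable τ s)
          (hEy.intervalIntegrable τ s),
        intervalIntegral.integral_const_mul, intervalIntegral.integral_const_mul,
        hftc τ s]
    have hEF : E s - E τ ≤ ∫ u in τ..s, F u := by
      rw [hsplit, hFval]
      have hexp : x τ * (Real.exp (G s) - Real.exp (G τ))
          = Real.exp (G s) * x τ - Real.exp (G τ) * x τ := by ring
      linarith [key1, hexp]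
    have hpt : ∀ u ∈ Set.Icc τ s, F u ≤ r / 2 := by
      intro u hu
      obtain ⟨huK, hxu, hGu⟩ := husub u hu
      have hsG : |Real.exp (G s) - Real.exp (G τ)| < ε :=
        (husub s ⟨hs1.le, le_refl s⟩).2.2
      have hGle1 : Real.exp (G τ) ≤ Real.exp (G u) := Real.exp_le_exp.mpr (hGmono τ u hu.1)
      have e1 : Real.exp (G s) - Real.exp (G u) ≤ ε := by
        have := abs_lt.mp hsG; linarith
      have e2 : x τ - x u ≤ ε := by
        have := abs_lt.mp hxu; linarith
      have hEwu : 0 ≤ Real.exp (G u) * w u := mul_nonneg (Real.exp_pos _).le (hw0 u)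
      have hEwM : Real.exp (G u) * w u ≤ M := hMw u huK
      have hyM : y u ≤ M := hMy u huK
      have hy0u : 0 ≤ y u := hy0 u
      have hFr : F u = (Real.exp (G u) * w u) * (x τ - x u)
          + (Real.exp (G s) - Real.exp (G u)) * y u := by rw [hFdef]; ring
      rw [hFr]
      have t1 : (Real.exp (G u) * w u) * (x τ - x u) ≤ M * ε :=
        le_trans (mul_le_mul_of_nonneg_left e2 hEwu) (mul_le_mul_of_nonneg_right hEwM hε0.le)
      have t2 : (Real.exp (G s) - Real.exp (G u)) * y u ≤ ε * M :=
        le_trans (mul_le_mul_of_nonneg_right e1 hy0u) (mul_le_mul_of_nonneg_left hyM hε0.le)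
      linarith
    have hintF : ∫ u in τ..s, F u ≤ (s - τ) * r / 2 := by
      have h : (∫ u in τ..s, F u) ≤ ∫ _u in τ..s, (r / 2 : ℝ) :=
        intervalIntegral.integral_mono_on hs1.le (hFc.intervalIntegrable τ s)
          (_root_.intervalIntegrable_const (c := r / 2)) hpt
      simpa [smul_eq_mul] using h
    rw [slope_def_field, div_lt_iff₀ (by linarith : (0:ℝ) < s - τ)]
    nlinarith
  -- apply the fencing lemma
  have hEt₀ : E t₀ ≤ x t₀ := by
    simp [hEdef, hGdef, intervalIntegral.integral_same]
  have hmain := image_le_of_liminf_slope_right_le_deriv_boundary (f := E) (a := t₀) (b := t)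
    hEc.continuousOn (B := fun _ => x t₀) (B' := fun _ => (0:ℝ)) hEt₀ continuousOn_const
    (fun u _ => (hasDerivWithinAt_const u _ (x t₀)).congr_deriv rfl)
    (fun τ hτm r hr => hbound τ hτm r hr)
  have hEt : E t ≤ x t₀ := hmain ⟨ht.le, le_refl t⟩
  have h2 : Real.exp (G t) * x t - (∫ u in t₀..t, Real.exp (G u) * y u) ≤ x t₀ := by
    simpa [hEdef] using hEt
  show x t * Real.exp (G t) ≤ x t₀ + ∫ u in t₀..t, Real.exp (G u) * y u
  have hc : x t * Real.exp (G t) = Real.exp (G t) * x t := mul_comm _ _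
  linarith

/-- Integral Grönwall-type lemma (Lemma 5.3): if continuous functions `g > 0`, `x ≥ 0`,
`y ≥ 0` on `[t₀, ∞)` satisfy
`x(τ₂) + ∫_{τ₁}^{τ₂} g^{2α} x ≤ x(τ₁) + ∫_{τ₁}^{τ₂} y` for all `t₀ ≤ τ₁ < τ₂`, then
`x(t) e^{∫_{t₀}^t g^{2α}} ≤ x(t₀) + ∫_{t₀}^t e^{∫_{t₀}^τ g^{2α}} y(τ) dτ` for all `t > t₀`. -/
theorem gronwall_integral (α t₀ : ℝ) (hα : 0 < α) (ht₀ : 0 ≤ t₀)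
    (g x y : ℝ → ℝ)
    (hg : ContinuousOn g (Set.Ici t₀)) (hx : ContinuousOn x (Set.Ici t₀))
    (hy : ContinuousOn y (Set.Ici t₀))
    (hgpos : ∀ t ∈ Set.Ici t₀, 0 < g t)
    (hxnonneg : ∀ t ∈ Set.Ici t₀, 0 ≤ x t)
    (hynonneg : ∀ t ∈ Set.Ici t₀, 0 ≤ y t)
    (hineq : ∀ τ₁ τ₂ : ℝ, t₀ ≤ τ₁ → τ₁ < τ₂ →
      x τ₂ + ∫ τ in τ₁..τ₂, g τ ^ (2*α) * x τ ≤ x τ₁ + ∫ τ in τ₁..τ₂, y τ) :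
    ∀ t : ℝ, t₀ < t →
      x t * Real.exp (∫ τ in t₀..t, g τ ^ (2*α)) ≤
        x t₀ + ∫ τ in t₀..t, Real.exp (∫ τ' in t₀..τ, g τ' ^ (2*α)) * y τ := by
  intro t ht
  have hmem : ∀ u : ℝ, max u t₀ ∈ Set.Ici t₀ := fun u => le_max_right u t₀
  set w : ℝ → ℝ := fun u => g (max u t₀) ^ (2*α) with hwdef
  set X : ℝ → ℝ := fun u => x (max u t₀) with hXdef
  set Y : ℝ → ℝ := fun u => y (max u t₀) with hYdef
  have hmax : Continuous fun u : ℝ => max u t₀ := continuous_id.max continuous_const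
  have hwc : Continuous w :=
    (hg.comp_continuous hmax hmem).rpow_const fun u => Or.inr (by positivity)
  have hXc : Continuous X := hx.comp_continuous hmax hmem
  have hYc : Continuous Y := hy.comp_continuous hmax hmem
  have hw0 : ∀ u, 0 ≤ w u := fun u => Real.rpow_nonneg (hgpos _ (hmem u)).le _
  have hX0 : ∀ u, 0 ≤ X u := fun u => hxnonneg _ (hmem u)
  have hY0 : ∀ u, 0 ≤ Y u := fun u => hynonneg _ (hmem u)
  have hweq : ∀ u ∈ Set.Ici t₀, w u = g u ^ (2*α) := by
    intro u hu; rw [hwdef]; simp only; rw [max_eq_left hu]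
  have hXeq : ∀ u ∈ Set.Ici t₀, X u = x u := by
    intro u hu; rw [hXdef]; simp only; rw [max_eq_left hu]
  have hYeq : ∀ u ∈ Set.Ici t₀, Y u = y u := by
    intro u hu; rw [hYdef]; simp only; rw [max_eq_left hu]
  have hineq' : ∀ τ₁ τ₂ : ℝ, t₀ ≤ τ₁ → τ₁ < τ₂ →
      X τ₂ + ∫ τ in τ₁..τ₂, w τ * X τ ≤ X τ₁ + ∫ τ in τ₁..τ₂, Y τ := by
    intro τ₁ τ₂ h1 h2
    have hsub : Set.uIcc τ₁ τ₂ ⊆ Set.Ici t₀ := by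
      rw [Set.uIcc_of_le h2.le]; exact fun u hu => le_trans h1 hu.1
    have e1 : (∫ τ in τ₁..τ₂, w τ * X τ) = ∫ τ in τ₁..τ₂, g τ ^ (2*α) * x τ :=
      intervalIntegral.integral_congr fun u hu => by
        rw [hweq u (hsub hu), hXeq u (hsub hu)]
    have e2 : (∫ τ in τ₁..τ₂, Y τ) = ∫ τ in τ₁..τ₂, y τ :=
      intervalIntegral.integral_congr fun u hu => hYeq u (hsub hu)
    rw [e1, e2, hXeq τ₂ (le_trans h1 h2.le), hXeq τ₁ h1]
    exact hineq τ₁ τ₂ h1 h2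
  have haux := gronwall_aux t₀ w X Y hwc hXc hYc hw0 hX0 hY0 hineq' t ht
  have hsub : Set.uIcc t₀ t ⊆ Set.Ici t₀ := by
    rw [Set.uIcc_of_le ht.le]; exact fun u hu => hu.1
  have e3 : (∫ τ in t₀..t, w τ) = ∫ τ in t₀..t, g τ ^ (2*α) :=
    intervalIntegral.integral_congr fun u hu => hweq u (hsub hu)
  have e4 : (∫ τ in t₀..t, Real.exp (∫ τ' in t₀..τ, w τ') * Y τ)
      = ∫ τ in t₀..t, Real.exp (∫ τ' in t₀..τ, g τ' ^ (2*α)) * y τ := by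
    apply intervalIntegral.integral_congr
    intro u hu
    have hu' : u ∈ Set.Ici t₀ := hsub hu
    have hsub2 : Set.uIcc t₀ u ⊆ Set.Ici t₀ := by
      rw [Set.uIcc_of_le hu']; exact fun v hv => hv.1
    show Real.exp (∫ τ' in t₀..u, w τ') * Y u
        = Real.exp (∫ τ' in t₀..u, g τ' ^ (2*α)) * y u
    rw [hYeq u hu',
      intervalIntegral.integral_congr (fun v hv => hweq v (hsub2 hv))]
  rw [e3, e4, hXeq t ht.le, hXeq t₀ (le_refl t₀)] at haux
  exact haux
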